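/- The function d(c) = (1+c)·κ(c) + (1 + 1/c)·κ(1/c) is decreasing for c > 1, where κ(c) = 3/(2c·log²c) − (2c+1)/(c(c−1)·log c) + (c+2)/(2(c−1)²). -/

import Mathlib

noncomputable def kappa (c : ℝ) : ℝ :=
  3 / (2 * c * (Real.log c) ^ 2) - (2 * c + 1) / (c * (c - 1) * Real.log c) +
    (c + 2) / (2 * (c - 1) ^ 2)

/-- Key polynomial inequality, by a certificate completing the square around `v = a^2/2`. -/
lemma key_poly (a v : ℝ) (ha : 0 < a) (hv : 0 ≤ v) :
    0 ≤ (12*a^3+48*a^2+60*a+24)*v^3 + (2*a^6+6*a^5+20*a^4+76*a^3+108*a^2+48*a)*v^2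
      - (a^7+20*a^6+81*a^5+110*a^4+48*a^3)*v + (3*a^8+16*a^7+25*a^6+12*a^5) := by
  have hC2 : 0 < 2*a^6+18*a^5+68*a^4+136*a^3+132*a^2+48*a := by positivity
  have hdisc : 0 ≤ 8*a^14+88*a^13+376*a^12+808*a^11+928*a^10+544*a^9+128*a^8 := by positivity
  have hsq := sq_nonneg (2*(2*a^6+18*a^5+68*a^4+136*a^3+132*a^2+48*a)*(v - a^2/2)
      + (2*a^8+14*a^7+36*a^6+40*a^5+16*a^4))
  have hq : 0 ≤ (a^10/2+5*a^9/2+4*a^8+2*a^7)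
      + (2*a^8+14*a^7+36*a^6+40*a^5+16*a^4)*(v - a^2/2)
      + (2*a^6+18*a^5+68*a^4+136*a^3+132*a^2+48*a)*(v - a^2/2)^2 := by
    nlinarith [hsq, hdisc, hC2]
  have hcub : 0 ≤ (12*a^3+48*a^2+60*a+24)*((v - a^2/2)^2*v) := by positivity
  nlinarith [hq, hcub]

/-- `M1 ≤ 0` for `c > 1`, `L = log c`. -/
lemma M1_nonpos (c L : ℝ) (hc : 1 < c) (h2 : c - 1 ≤ c * L) :
    (-12*c^3-12*c^2)*L^3 + (-2*c^5+6*c^4+16*c^3-16*c^2-6*c+2)*L^2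
      + (5*c^5-3*c^4-2*c^3-2*c^2-3*c+5)*L + (-6*c^5+6*c^4+12*c^3-12*c^2-6*c+6) ≤ 0 := by
  have ha : 0 < c - 1 := by linarith
  have hv : 0 ≤ c*L - (c-1) := by linarith
  have hkey := key_poly (c-1) (c*L - (c-1)) ha hv
  have hc3 : 0 < c^3 := by positivity
  nlinarith [hkey, hc3, mul_pos hc3 hc3]

theorem stmt_16 :
    AntitoneOn (fun c : ℝ => (1 + c) * kappa c + (1 + 1 / c) * kappa (1 / c))
      (Set.Ioi (1:ℝ)) := by
  set g : ℝ → ℝ := fun x =>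
    (3*x^4 - 6*x^2 + 3 + (-2*x^4 - 8*x^3 + 8*x + 2) * Real.log x
      + (3*x^3 + 6*x^2 + 3*x) * Real.log x ^ 2) /
    ((2*x^3 - 4*x^2 + 2*x) * Real.log x ^ 2) with hgdef
  have hHD : ∀ c ∈ Set.Ioi (1:ℝ), HasDerivAt g
      ((2*Real.log c*(c-1) * ((-12*c^3-12*c^2)*Real.log c^3
        + (-2*c^5+6*c^4+16*c^3-16*c^2-6*c+2)*Real.log c^2
        + (5*c^5-3*c^4-2*c^3-2*c^2-3*c+5)*Real.log c
        + (-6*c^5+6*c^4+12*c^3-12*c^2-6*c+6)))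
      / ((2*c^3 - 4*c^2 + 2*c) * Real.log c ^ 2)^2) c := by
    intro c hc
    have hc1 : (1:ℝ) < c := hc
    have hc0 : (0:ℝ) < c := by linarith
    have hlogpos : 0 < Real.log c := Real.log_pos hc1
    have hlog : HasDerivAt Real.log c⁻¹ c := Real.hasDerivAt_log (ne_of_gt hc0)
    have hBpos : 0 < (2*c^3 - 4*c^2 + 2*c) * Real.log c ^ 2 := by
      have h1 : (2*c^3 - 4*c^2 + 2*c) * Real.log c ^ 2 = 2*c*(c-1)^2*Real.log c^2 := by ring
      rw [h1]
      have : (0:ℝ) < c - 1 := by linarith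
      positivity
    have hBne := ne_of_gt hBpos
    have hp1 : HasDerivAt (fun x : ℝ => 3*x^4 - 6*x^2 + 3) (3*(↑(4:ℕ)*c^(4-1)) - 6*(↑(2:ℕ)*c^(2-1))) c :=
      (((hasDerivAt_pow 4 c).const_mul 3).sub ((hasDerivAt_pow 2 c).const_mul 6)).add_const 3
    have hp2 : HasDerivAt (fun x : ℝ => -2*x^4 - 8*x^3 + 8*x + 2)
        ((-2)*(↑(4:ℕ)*c^(4-1)) - 8*(↑(3:ℕ)*c^(3-1)) + 8*1) c :=
      ((((hasDerivAt_pow 4 c).const_mul (-2)).sub ((hasDerivAt_pow 3 c).const_mul 8)).add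
        ((hasDerivAt_id' c).const_mul 8)).add_const 2
    have hp3 : HasDerivAt (fun x : ℝ => 3*x^3 + 6*x^2 + 3*x)
        (3*(↑(3:ℕ)*c^(3-1)) + 6*(↑(2:ℕ)*c^(2-1)) + 3*1) c :=
      (((hasDerivAt_pow 3 c).const_mul 3).add ((hasDerivAt_pow 2 c).const_mul 6)).add
        ((hasDerivAt_id' c).const_mul 3)
    have hp4 : HasDerivAt (fun x : ℝ => 2*x^3 - 4*x^2 + 2*x)
        (2*(↑(3:ℕ)*c^(3-1)) - 4*(↑(2:ℕ)*c^(2-1)) + 2*1) c :=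
      (((hasDerivAt_pow 3 c).const_mul 2).sub ((hasDerivAt_pow 2 c).const_mul 4)).add
        ((hasDerivAt_id' c).const_mul 2)
    have hlogsq : HasDerivAt (fun x : ℝ => Real.log x ^ 2) (↑(2:ℕ) * Real.log c ^ (2-1) * c⁻¹) c :=
      hlog.pow 2
    have hA := (hp1.add (hp2.mul hlog)).add (hp3.mul hlogsq)
    have hB := hp4.mul hlogsq
    have hraw := hA.div hB hBne
    convert hraw using 1
    · rfl
    · rfl
    · rfl
    have hcne : c ≠ 0 := ne_of_gt hc0
    simp only [Pi.add_apply, Pi.mul_apply]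
    field_simp
    ring
  have hg : AntitoneOn g (Set.Ioi (1:ℝ)) := by
    apply antitoneOn_of_deriv_nonpos (convex_Ioi 1)
    · intro x hx
      exact ((hHD x hx).differentiableAt.continuousAt).continuousWithinAt
    · rw [interior_Ioi]
      intro x hx
      exact (hHD x hx).differentiableAt.differentiableWithinAt
    · rw [interior_Ioi]
      intro x hx
      rw [(hHD x hx).deriv]
      have hx1 : (1:ℝ) < x := hx
      have hx0 : (0:ℝ) < x := by linarith
      have hlogpos : 0 < Real.log x := Real.log_pos hx1
      have hM1 := M1_nonpos x (Real.log x) hx1 (by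
        have h := Real.one_sub_inv_le_log_of_pos hx0
        have h2 : x * (1 - x⁻¹) ≤ x * Real.log x := by
          apply mul_le_mul_of_nonneg_left h (le_of_lt hx0)
        have h3 : x * (1 - x⁻¹) = x - 1 := by
          field_simp
        linarith)
      apply div_nonpos_of_nonpos_of_nonneg
      · apply mul_nonpos_of_nonneg_of_nonpos
        · have : (0:ℝ) < x - 1 := by linarith
          positivity
        · exact hM1
      · positivity
  have feq : ∀ z : ℝ, z ∈ Set.Ioi (1:ℝ) →
      (1 + z) * kappa z + (1 + 1 / z) * kappa (1 / z) = g z := by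
    intro z hz
    have hz1 : (1:ℝ) < z := hz
    have hz0 : (0:ℝ) < z := by linarith
    have hz0' : z ≠ 0 := ne_of_gt hz0
    have hz1' : (0:ℝ) < z - 1 := by linarith
    have hzm1 : z - 1 ≠ 0 := ne_of_gt hz1'
    have hlp : 0 < Real.log z := Real.log_pos hz1
    have hlz : Real.log z ≠ 0 := ne_of_gt hlp
    have hinv0 : z⁻¹ ≠ 0 := inv_ne_zero hz0'
    have hinv1 : z⁻¹ - 1 ≠ 0 := by
      have h1 : z⁻¹ < 1 := by rw [inv_lt_one_iff₀]; right; exact hz1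
      have : z⁻¹ - 1 < 0 := by linarith
      exact ne_of_lt this
    have hnl : -Real.log z ≠ 0 := neg_ne_zero.mpr hlz
    have e1 : (3:ℝ)/(2*z⁻¹*(-Real.log z)^2) = 3*z/(2*Real.log z^2) := by
      rw [div_eq_div_iff (by exact mul_ne_zero (mul_ne_zero two_ne_zero hinv0) (pow_ne_zero 2 hnl))
        (by exact mul_ne_zero two_ne_zero (pow_ne_zero 2 hlz))]
      field_simp
    have e2 : (2*z⁻¹+1)/(z⁻¹*(z⁻¹-1)*(-Real.log z)) = z*(z+2)/((z-1)*Real.log z) := by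
      rw [div_eq_div_iff (by exact mul_ne_zero (mul_ne_zero hinv0 hinv1) hnl)
        (by exact mul_ne_zero hzm1 hlz)]
      field_simp
      ring
    have e3 : (z⁻¹+2)/(2*(z⁻¹-1)^2) = z*(2*z+1)/(2*(z-1)^2) := by
      rw [div_eq_div_iff (by exact mul_ne_zero two_ne_zero (pow_ne_zero 2 hinv1))
        (by exact mul_ne_zero two_ne_zero (pow_ne_zero 2 hzm1))]
      field_simp
      ring
    have hk : kappa z⁻¹ = (3*z)/(2*Real.log z^2) - (z*(z+2))/((z-1)*Real.log z)
        + (z*(2*z+1))/(2*(z-1)^2) := by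
      unfold kappa
      rw [Real.log_inv, e1, e2, e3]
    have hBne : (2*z^3 - 4*z^2 + 2*z) * Real.log z ^ 2 ≠ 0 := by
      have he : (2*z^3 - 4*z^2 + 2*z) * Real.log z ^ 2 = 2*z*(z-1)^2*Real.log z^2 := by ring
      rw [he]; positivity
    simp only [hgdef, one_div]
    rw [hk]
    unfold kappa
    rw [eq_div_iff hBne]
    field_simp
    ring
  intro x hx y hy hxy
  have h := hg hx hy hxy
  simp only
  rw [feq x hx, feq y hy]
  exact h
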